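/- Let Y ∈ ℝⁿ, W₁ ∈ ℝ^{n×q}, W₂ ∈ ℝ^{n×L}, W = [W₁ W₂], with WᵀW, W₁ᵀW₁ and W̃₂ᵀW̃₂ invertible and σ̂²(W) > 0, and set P̃ = W̃₂(W̃₂ᵀW̃₂)⁻¹W̃₂ᵀ. Let n ≥ 1, p ≥ 1 and η ≥ 0. If Yᵀ P̃ Y < σ̂²(W) · L(log n + 2η log p), then n·log σ̂²(W) + L(log n + 2η log p) > n·log σ̂²(W₁); that is, the EBIC strictly increases when the L extra columns W₂ are added to the design matrix (the deterministic core of Theorem 2(ii): the EBIC stops once the residual quadratic form of a candidate group is below the penalty). -/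

import Mathlib

open Matrix

/-- Variance estimate from OLS with design `W`. -/
noncomputable def sigmaHat {n : ℕ} {d : Type*} [Fintype d] [DecidableEq d]
    (Y : Fin n → ℝ) (W : Matrix (Fin n) d ℝ) : ℝ :=
  (1 / (n : ℝ)) * (Y ⬝ᵥ Y - Y ⬝ᵥ ((W * (Wᵀ * W)⁻¹ * Wᵀ) *ᵥ Y))

/-- Decomposition of the projection matrix when a block of columns is added. -/
lemma proj_decomp {n q L : ℕ}
    (W₁ : Matrix (Fin n) (Fin q) ℝ) (W₂ : Matrix (Fin n) (Fin L) ℝ)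
    (hW1 : IsUnit (W₁ᵀ * W₁))
    (Wt₂ : Matrix (Fin n) (Fin L) ℝ)
    (hWt₂ : Wt₂ = W₂ - W₁ * (W₁ᵀ * W₁)⁻¹ * W₁ᵀ * W₂)
    (hWt₂u : IsUnit (Wt₂ᵀ * Wt₂)) :
    fromCols W₁ W₂ * ((fromCols W₁ W₂)ᵀ * fromCols W₁ W₂)⁻¹ * (fromCols W₁ W₂)ᵀ
      = W₁ * (W₁ᵀ * W₁)⁻¹ * W₁ᵀ + Wt₂ * (Wt₂ᵀ * Wt₂)⁻¹ * Wt₂ᵀ := by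
  set W : Matrix (Fin n) (Fin q ⊕ Fin L) ℝ := fromCols W₁ W₂ with hWdef
  have hA : IsUnit (W₁ᵀ * W₁).det := (isUnit_iff_isUnit_det _).mp hW1
  have hS : IsUnit (Wt₂ᵀ * Wt₂).det := (isUnit_iff_isUnit_det _).mp hWt₂u
  -- orthogonality
  have hperp : W₁ᵀ * Wt₂ = 0 := by
    rw [hWt₂, Matrix.mul_sub,
      show W₁ᵀ * (W₁ * (W₁ᵀ * W₁)⁻¹ * W₁ᵀ * W₂)
          = (W₁ᵀ * W₁) * ((W₁ᵀ * W₁)⁻¹ * (W₁ᵀ * W₂)) by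
        simp only [Matrix.mul_assoc],
      Matrix.mul_nonsing_inv_cancel_left _ _ hA, sub_self]
  have hperp' : Wt₂ᵀ * W₁ = 0 := by
    have := congrArg Matrix.transpose hperp
    simpa using this
  -- change of basis
  set U : Matrix (Fin q ⊕ Fin L) (Fin q ⊕ Fin L) ℝ :=
    fromBlocks 1 (-((W₁ᵀ * W₁)⁻¹ * (W₁ᵀ * W₂))) 0 1 with hUdef
  haveI h1q : Invertible (1 : Matrix (Fin q) (Fin q) ℝ) := invertibleOne
  haveI h1L : Invertible (1 : Matrix (Fin L) (Fin L) ℝ) := invertibleOne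
  haveI : Invertible U := Matrix.fromBlocksZero₂₁Invertible 1 _ 1
  have hU : IsUnit U.det := isUnit_det_of_invertible U
  have hUt : IsUnit Uᵀ.det := by rwa [Matrix.det_transpose]
  set V : Matrix (Fin n) (Fin q ⊕ Fin L) ℝ := fromCols W₁ Wt₂ with hVdef
  have hV : V = W * U := by
    rw [hVdef, hWdef, hUdef, fromCols_mul_fromBlocks]
    simp only [Matrix.mul_one, Matrix.mul_zero, add_zero, Matrix.mul_neg, neg_add_eq_sub]
    rw [hWt₂]
    congr 1
    simp only [Matrix.mul_assoc]
  -- Gram matrix of V is block diagonal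
  have hVtV : Vᵀ * V = fromBlocks (W₁ᵀ * W₁) 0 0 (Wt₂ᵀ * Wt₂) := by
    rw [hVdef, transpose_fromCols, fromRows_mul_fromCols, hperp, hperp']
  have hVtVinv : (Vᵀ * V)⁻¹ = fromBlocks (W₁ᵀ * W₁)⁻¹ 0 0 (Wt₂ᵀ * Wt₂)⁻¹ := by
    haveI iA : Invertible (W₁ᵀ * W₁) := hW1.nonempty_invertible.some
    haveI iS : Invertible (Wt₂ᵀ * Wt₂) := hWt₂u.nonempty_invertible.some
    haveI : Invertible (fromBlocks (W₁ᵀ * W₁) 0 0 (Wt₂ᵀ * Wt₂)) :=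
      Matrix.fromBlocksZero₂₁Invertible _ _ _
    rw [hVtV, ← invOf_eq_nonsing_inv, Matrix.invOf_fromBlocks_zero₂₁_eq]
    simp [invOf_eq_nonsing_inv]
  -- projections agree
  have hproj : W * (Wᵀ * W)⁻¹ * Wᵀ = V * (Vᵀ * V)⁻¹ * Vᵀ := by
    rw [hV, Matrix.transpose_mul]
    rw [show Uᵀ * Wᵀ * (W * U) = Uᵀ * ((Wᵀ * W) * U) by simp only [Matrix.mul_assoc]]
    rw [Matrix.mul_inv_rev, Matrix.mul_inv_rev]
    symm
    calc W * U * (U⁻¹ * (Wᵀ * W)⁻¹ * Uᵀ⁻¹) * (Uᵀ * Wᵀ)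
        = W * (U * U⁻¹) * (Wᵀ * W)⁻¹ * ((Uᵀ)⁻¹ * Uᵀ) * Wᵀ := by
          simp only [Matrix.mul_assoc]
      _ = W * (Wᵀ * W)⁻¹ * Wᵀ := by
          rw [Matrix.mul_nonsing_inv _ hU, Matrix.nonsing_inv_mul _ hUt]
          simp [Matrix.mul_assoc]
  rw [hproj, hVtVinv, hVdef, fromCols_mul_fromBlocks, transpose_fromCols,
    fromCols_mul_fromRows]
  simp [Matrix.mul_assoc]

/-- Deterministic core of Theorem 2(ii): the EBIC strictly increases when the
residual quadratic form of a candidate group is below the penalty. -/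
theorem stmt15 (n p q L : ℕ) (hn : 1 ≤ n) (hp : 1 ≤ p)
    (η : ℝ) (hη : 0 ≤ η)
    (Y : Fin n → ℝ)
    (W₁ : Matrix (Fin n) (Fin q) ℝ) (W₂ : Matrix (Fin n) (Fin L) ℝ)
    (W : Matrix (Fin n) (Fin q ⊕ Fin L) ℝ) (hW : W = fromCols W₁ W₂)
    (hWtW : IsUnit (Wᵀ * W)) (hW1 : IsUnit (W₁ᵀ * W₁))
    (Wt₂ : Matrix (Fin n) (Fin L) ℝ)
    (hWt₂ : Wt₂ = W₂ - W₁ * (W₁ᵀ * W₁)⁻¹ * W₁ᵀ * W₂)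
    (hWt₂u : IsUnit (Wt₂ᵀ * Wt₂))
    (hσ : 0 < sigmaHat Y W)
    (Pt : Matrix (Fin n) (Fin n) ℝ)
    (hPt : Pt = Wt₂ * (Wt₂ᵀ * Wt₂)⁻¹ * Wt₂ᵀ)
    (hsmall : Y ⬝ᵥ (Pt *ᵥ Y)
      < sigmaHat Y W * ((L : ℝ) * (Real.log n + 2 * η * Real.log p))) :
    (n : ℝ) * Real.log (sigmaHat Y W)
        + (L : ℝ) * (Real.log n + 2 * η * Real.log p)
      > (n : ℝ) * Real.log (sigmaHat Y W₁) := by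
  have hS : IsUnit (Wt₂ᵀ * Wt₂).det := (isUnit_iff_isUnit_det _).mp hWt₂u
  set t : ℝ := Y ⬝ᵥ (Pt *ᵥ Y) with htdef
  set s : ℝ := sigmaHat Y W with hsdef
  set pen : ℝ := (L : ℝ) * (Real.log n + 2 * η * Real.log p) with hpendef
  have hnpos : (0:ℝ) < n := by exact_mod_cast hn
  -- t ≥ 0
  have hPtsym : Ptᵀ = Pt := by
    have hSt : (Wt₂ᵀ * Wt₂)ᵀ = Wt₂ᵀ * Wt₂ := by
      rw [Matrix.transpose_mul, Matrix.transpose_transpose]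
    rw [hPt]
    simp only [Matrix.transpose_mul, Matrix.transpose_transpose,
      Matrix.transpose_nonsing_inv, hSt, Matrix.mul_assoc]
  have hPtidem : Pt * Pt = Pt := by
    rw [hPt]
    rw [show Wt₂ * (Wt₂ᵀ * Wt₂)⁻¹ * Wt₂ᵀ * (Wt₂ * (Wt₂ᵀ * Wt₂)⁻¹ * Wt₂ᵀ)
        = Wt₂ * ((Wt₂ᵀ * Wt₂)⁻¹ * ((Wt₂ᵀ * Wt₂) * ((Wt₂ᵀ * Wt₂)⁻¹ * Wt₂ᵀ))) by
      simp only [Matrix.mul_assoc]]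
    rw [Matrix.nonsing_inv_mul_cancel_left _ _ hS]
    simp only [Matrix.mul_assoc]
  have ht : 0 ≤ t := by
    have h1 : t = (Pt *ᵥ Y) ⬝ᵥ (Pt *ᵥ Y) := by
      rw [htdef]
      conv_lhs => rw [← hPtidem, ← Matrix.mulVec_mulVec, Matrix.dotProduct_mulVec,
        ← Matrix.mulVec_transpose, hPtsym]
    rw [h1, dotProduct]
    exact Finset.sum_nonneg fun i _ => mul_self_nonneg _
  -- σ̂(W₁) = σ̂(W) + t/n
  have hdecomp : sigmaHat Y W₁ = s + (1 / (n:ℝ)) * t := by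
    have hkey := proj_decomp W₁ W₂ hW1 Wt₂ hWt₂ hWt₂u
    rw [← hW] at hkey
    rw [hsdef, htdef, sigmaHat, sigmaHat, hkey, ← hPt, Matrix.add_mulVec, dotProduct_add]
    ring
  set s1 : ℝ := sigmaHat Y W₁ with hs1def
  have hs1pos : 0 < s1 := by
    rw [hdecomp]
    have : 0 ≤ (1 / (n:ℝ)) * t := by positivity
    linarith
  -- penalty bound
  have hts : t / s < pen := by
    rw [div_lt_iff₀ hσ]
    linarith [hsmall]
  -- log inequality
  have hlog : Real.log s1 ≤ Real.log s + t / ((n:ℝ) * s) := by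
    have hdiv : 0 < s1 / s := div_pos hs1pos hσ
    have h1 : Real.log (s1 / s) ≤ s1 / s - 1 := Real.log_le_sub_one_of_pos hdiv
    have h2 : s1 / s - 1 = t / ((n:ℝ) * s) := by
      rw [hdecomp]
      field_simp
      ring
    rw [Real.log_div (ne_of_gt hs1pos) (ne_of_gt hσ)] at h1
    linarith [h1, h2 ▸ h1]
  have hfin : (n:ℝ) * Real.log s1 ≤ (n:ℝ) * Real.log s + t / s := by
    have h3 : (n:ℝ) * (t / ((n:ℝ) * s)) = t / s := by
      field_simp
    nlinarith [mul_le_mul_of_nonneg_left hlog (le_of_lt hnpos)]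
  have : (n:ℝ) * Real.log s + t / s < (n:ℝ) * Real.log s + pen := by linarith
  linarith
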